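/- Let n ≥ 1, and for each i ∈ {1,...,n} let p_i be a probability distribution on {0,1,...,i-1} (i.e., p_i(j) ≥ 0 and ∑_{j=0}^{i-1} p_i(j) = 1). Consider the product distribution P(z) = ∏_{i=1}^n p_i(z_i) over branching structures z = (z_1,...,z_n) with z_i ∈ {0,...,i-1}. Fix sources s_1,...,s_n ∈ {1,...,S} and define root(i, z) as the root source of event i under z. Define r_i(s) = P({z : root(i,z) = s}). Then the recursion r_i(s) = 1[s_i = s]·p_i(0) + ∑_{j=1}^{i-1} r_j(s)·p_i(j) holds for all i and s. -/

import Mathlib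

/-- Root source of event `i` (0-indexed) under a branching structure `z`, where
`z i = none` marks `i` as an immigrant (root source is its own source `s i`) and
`z i = some j` means event `j` (with `j < i`) is the parent of `i`. -/
def finRoot {n : ℕ} (s : Fin n → ℕ) (z : ∀ i : Fin n, Option (Fin i.1)) : Fin n → ℕ
  | i => match z i with
    | none => s i
    | some j => finRoot s z ⟨j.1, j.2.trans i.2⟩
termination_by i => i.1
decreasing_by exact j.2

lemma finRoot_eq {n : ℕ} (s : Fin n → ℕ) (z : ∀ i : Fin n, Option (Fin i.1)) (i : Fin n) :
    finRoot s z i = match z i with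
      | none => s i
      | some j => finRoot s z ⟨j.1, j.2.trans i.2⟩ := by
  rw [finRoot]

lemma finRoot_congr {n : ℕ} (s : Fin n → ℕ) (z z' : ∀ i : Fin n, Option (Fin i.1)) :
    ∀ (i : Fin n), (∀ k : Fin n, k.1 ≤ i.1 → z k = z' k) → finRoot s z i = finRoot s z' i
  | i, h => by
    have hi : z' i = z i := (h i le_rfl).symm
    rw [finRoot_eq, finRoot_eq, hi]
    cases hz : z i with
    | none => rfl
    | some j =>
      exact finRoot_congr s z z' ⟨j.1, j.2.trans i.2⟩
        (fun k hk => h k (hk.trans (le_of_lt j.2)))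
termination_by i => i.1
decreasing_by exact j.2

/-- Under the product distribution `P(z) = ∏ i, p i (z i)` over
branching structures (with `p i` a probability distribution on the `i + 1` possible
parents of event `i`), the root source probabilities
`r i σ = P({z : root(i, z) = σ})` satisfy the dynamic-programming recursion
`r i σ = 1[s i = σ]·p i(immigrant) + ∑_{j<i} r j σ · p i (some j)`. -/
theorem stmt2 (n S : ℕ) (hn : 1 ≤ n) (hS : 1 ≤ S)
    (s : Fin n → ℕ) (hs : ∀ i, 1 ≤ s i ∧ s i ≤ S)
    (p : ∀ i : Fin n, Option (Fin i.1) → ℝ)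
    (hp0 : ∀ i j, 0 ≤ p i j) (hp1 : ∀ i, ∑ j, p i j = 1)
    (r : Fin n → ℕ → ℝ)
    (hr : ∀ i σ, r i σ =
      ∑ z : ∀ i : Fin n, Option (Fin i.1),
        (if finRoot s z i = σ then ∏ k, p k (z k) else 0)) :
    ∀ (i : Fin n) (σ : ℕ),
      r i σ = (if s i = σ then p i none else 0)
        + ∑ j : Fin i.1, r ⟨j.1, j.2.trans i.2⟩ σ * p i (some j) := by
  classical
  intro i σ
  set e := Equiv.piSplitAt i (fun k : Fin n => Option (Fin k.1)) with he
  set Z : Option (Fin i.1) → (∀ k : { k : Fin n // k ≠ i }, Option (Fin k.1.1)) →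
      (∀ k : Fin n, Option (Fin k.1)) := fun c w => e.symm (c, w) with hZ
  have hZi : ∀ c w, Z c w i = c := by
    intro c w
    simp [hZ, he, Equiv.piSplitAt]
  have hZk : ∀ c w (k : Fin n) (hk : k ≠ i), Z c w k = w ⟨k, hk⟩ := by
    intro c w k hk
    simp [hZ, he, Equiv.piSplitAt, hk]
  set G : (∀ k : { k : Fin n // k ≠ i }, Option (Fin k.1.1)) → ℝ :=
    fun w => ∏ k, p k.1 (w k) with hG
  -- product splits
  have hprod : ∀ c w, (∏ k, p k (Z c w k)) = p i c * G w := by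
    intro c w
    rw [Fintype.prod_eq_mul_prod_compl i]
    congr 1
    · rw [hZi]
    · rw [hG]
      rw [Finset.prod_subtype ({i}ᶜ : Finset (Fin n))
          (p := fun k : Fin n => k ≠ i) (by simp) (fun k => p k (Z c w k))]
      exact Finset.prod_congr rfl fun k _ => by rw [hZk c w k.1 k.2]
  -- root independence from the i-th coordinate for indices below i
  have hroot : ∀ c w (j : Fin n), j.1 < i.1 →
      finRoot s (Z c w) j = finRoot s (Z none w) j := by
    intro c w j hj
    refine finRoot_congr s _ _ j fun k hk => ?_
    have hki : k ≠ i := by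
      intro hkeq
      rw [hkeq] at hk
      omega
    rw [hZk c w k hki, hZk none w k hki]
  have hGsum : ∑ w, G w = 1 := by
    rw [hG, ← Fintype.prod_sum]
    rw [Finset.prod_eq_one]
    intro k _
    exact hp1 k.1
  -- rewrite each r j σ over the split
  have hr' : ∀ (j : Fin n), j.1 < i.1 →
      r j σ = ∑ w, (if finRoot s (Z none w) j = σ then G w else 0) := by
    intro j hj
    rw [hr j σ, ← e.symm.sum_comp, Fintype.sum_prod_type]
    have : ∀ c, (∑ w, if finRoot s (Z c w) j = σ then ∏ k, p k (Z c w k) else 0)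
        = p i c * ∑ w, (if finRoot s (Z none w) j = σ then G w else 0) := by
      intro c
      rw [Finset.mul_sum]
      refine Finset.sum_congr rfl fun w _ => ?_
      rw [hroot c w j hj, hprod c w, mul_ite, mul_zero]
    rw [Finset.sum_congr rfl fun c _ => this c]
    rw [← Finset.sum_mul, hp1 i, one_mul]
  -- main computation
  rw [hr i σ, ← e.symm.sum_comp, Fintype.sum_prod_type]
  rw [Fintype.sum_option]
  congr 1
  · -- immigrant term
    have : ∀ w, (if finRoot s (Z none w) i = σ then ∏ k, p k (Z none w k) else 0)
        = (if s i = σ then p i none else 0) * G w := by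
      intro w
      have hri : finRoot s (Z none w) i = s i := by
        rw [finRoot_eq]
        rw [hZi]
      rw [hri, hprod, ite_mul, zero_mul]
    rw [Finset.sum_congr rfl fun c _ => this c]
    rw [← Finset.mul_sum, hGsum, mul_one]
  · -- triggered terms
    refine Finset.sum_congr rfl fun j _ => ?_
    have : ∀ w, (if finRoot s (Z (some j) w) i = σ then ∏ k, p k (Z (some j) w k) else 0)
        = (if finRoot s (Z none w) ⟨j.1, j.2.trans i.2⟩ = σ then G w else 0) * p i (some j) := by
      intro w
      have hri : finRoot s (Z (some j) w) i
          = finRoot s (Z none w) ⟨j.1, j.2.trans i.2⟩ := by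
        rw [finRoot_eq]
        rw [hZi]
        exact hroot (some j) w ⟨j.1, j.2.trans i.2⟩ j.2
      rw [hri, hprod, ite_mul, zero_mul, mul_comm (p i (some j))]
    rw [Finset.sum_congr rfl fun c _ => this c]
    rw [← Finset.sum_mul, ← hr' ⟨j.1, j.2.trans i.2⟩ j.2]
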